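/- Let p be a prime with p ≡ 1 or 4 (mod 5) (so p ∉ {2, 5}). Let φ ∈ ℤ_p satisfy φ² = φ + 1, and let u ∈ ℤ_p satisfy u^{p−1} = 1 and ‖φ − u‖_p < 1. Then ‖L(p−1) − 2‖_p = ‖φ − u‖_p², i.e., the p-adic norm of L(p−ε) − 2ε equals the square of ‖φ/ω(φ) − 1‖_p. -/

import Mathlib

/-- The Lucas sequence: `L 0 = 2`, `L 1 = 1`, `L (n+2) = L (n+1) + L n`. -/
def lucas : ℕ → ℕ
  | 0 => 2
  | 1 => 1
  | n + 2 => lucas (n + 1) + lucas n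

private lemma lucas_cast {p : ℕ} [Fact p.Prime] (φ : ℤ_[p]) (hφ : φ ^ 2 = φ + 1) :
    ∀ m, (lucas m : ℤ_[p]) = φ ^ m + (1 - φ) ^ m := by
  have key : ∀ m, (lucas m : ℤ_[p]) = φ ^ m + (1 - φ) ^ m ∧
      (lucas (m+1) : ℤ_[p]) = φ ^ (m+1) + (1 - φ) ^ (m+1) := by
    intro m
    induction m with
    | zero => constructor <;> simp [lucas] <;> norm_num
    | succ k ih =>
      refine ⟨ih.2, ?_⟩
      have h0 : (lucas (k+2) : ℤ_[p]) = (lucas (k+1) : ℤ_[p]) + (lucas k : ℤ_[p]) := by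
        rw [show lucas (k+2) = lucas (k+1) + lucas k from rfl]; push_cast; ring
      rw [h0, ih.1, ih.2]
      have h1 : φ ^ (k+2) = φ ^ (k+1) + φ ^ k := by
        have h : φ ^ (k+2) = φ ^ k * φ ^ 2 := by ring
        rw [h, hφ]; ring
      have h2 : (1-φ) ^ (k+2) = (1-φ) ^ (k+1) + (1-φ) ^ k := by
        have e : (1-φ) ^ 2 = (1-φ) + 1 := by linear_combination hφ
        have h : (1-φ) ^ (k+2) = (1-φ) ^ k * (1-φ) ^ 2 := by ring
        rw [h, e]; ring
      rw [h1, h2]; ring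
  exact fun m => (key m).1

theorem norm_lucas_sub_two_eq_sq_norm_sub_teichmuller (p : ℕ) [Fact p.Prime]
    (hp5 : p % 5 = 1 ∨ p % 5 = 4)
    (φ u : ℤ_[p]) (hφ : φ ^ 2 = φ + 1)
    (hu : u ^ (p - 1) = 1) (hu2 : ‖φ - u‖ < 1) :
    ‖(lucas (p - 1) : ℤ_[p]) - 2‖ = ‖φ - u‖ ^ 2 := by
  have hprime := (Fact.out : p.Prime)
  have hp2 : p ≠ 2 := by rintro rfl; omega
  have hpodd : Odd p := hprime.odd_of_ne_two hp2
  have hp1 : 1 < p := hprime.one_lt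
  set n := p - 1 with hn
  have hn1 : 1 ≤ n := by omega
  have hneven : Even n := by
    rcases hpodd with ⟨k, hk⟩; exact ⟨k, by omega⟩
  -- φ is a unit with φ * (φ - 1) = 1
  have hunit : φ * (φ - 1) = 1 := by linear_combination hφ
  have hφnorm : ‖φ‖ = 1 := by
    have h1 : ‖φ‖ * ‖φ - 1‖ = 1 := by rw [← norm_mul, hunit, norm_one]
    have h2 : ‖φ‖ ≤ 1 := φ.norm_le_one
    have h3 : ‖φ - 1‖ ≤ 1 := (φ - 1).norm_le_one
    nlinarith [norm_nonneg φ, norm_nonneg (φ - 1)]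
  have hunorm : ‖u‖ = 1 := by
    have h1 : ‖u‖ ^ n = 1 := by rw [← norm_pow, hu, norm_one]
    have h2 : ‖u‖ ≤ 1 := u.norm_le_one
    rcases lt_or_eq_of_le h2 with h | h
    · exfalso
      have := pow_lt_one₀ (norm_nonneg u) h (by omega : n ≠ 0)
      rw [h1] at this; exact lt_irrefl 1 this
    · exact h
  -- step 1: ‖lucas n - 2‖ = ‖φ^n - 1‖^2
  have hlc : (lucas n : ℤ_[p]) = φ ^ n + (1 - φ) ^ n := lucas_cast φ hφ n
  have hneg : (1 - φ) ^ n = (φ - 1) ^ n := by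
    rw [show (1 - φ) = -(φ - 1) by ring, hneven.neg_pow]
  have hkey : φ ^ n * ((lucas n : ℤ_[p]) - 2) = (φ ^ n - 1) ^ 2 := by
    rw [hlc, hneg]
    have h : φ ^ n * (φ - 1) ^ n = 1 := by
      rw [← mul_pow, hunit, one_pow]
    linear_combination h
  have step1 : ‖(lucas n : ℤ_[p]) - 2‖ = ‖φ ^ n - 1‖ ^ 2 := by
    have := congrArg (‖·‖) hkey
    simp only [norm_mul, norm_pow, hφnorm, one_pow, one_mul] at this
    rw [this]
  -- step 2: ‖φ^n - 1‖ = ‖φ - u‖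
  set s : ℤ_[p] := ∑ i ∈ Finset.range n, φ ^ i * u ^ (n - 1 - i) with hs
  have hgeom : s * (φ - u) = φ ^ n - u ^ n := geom_sum₂_mul φ u n
  -- s ≡ n * u^(n-1) mod (φ - u)
  have hdvd : (φ - u) ∣ (s - (n : ℤ_[p]) * u ^ (n - 1)) := by
    have h : s - (n : ℤ_[p]) * u ^ (n - 1) =
        ∑ i ∈ Finset.range n, (φ ^ i - u ^ i) * u ^ (n - 1 - i) := by
      have hc : (n : ℤ_[p]) * u ^ (n-1) = ∑ _i ∈ Finset.range n, u ^ (n-1) := by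
        rw [Finset.sum_const, Finset.card_range, nsmul_eq_mul]
      rw [hs, hc, ← Finset.sum_sub_distrib]
      apply Finset.sum_congr rfl
      intro i hi
      rw [Finset.mem_range] at hi
      have : u ^ (n - 1) = u ^ i * u ^ (n - 1 - i) := by
        rw [← pow_add]; congr 1; omega
      rw [this]; ring
    rw [h]
    apply Finset.dvd_sum
    intro i _
    exact Dvd.dvd.mul_right (sub_dvd_pow_sub_pow φ u i) _
  have hsmall : ‖s - (n : ℤ_[p]) * u ^ (n - 1)‖ < 1 := by
    obtain ⟨c, hc⟩ := hdvd
    rw [hc, norm_mul]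
    calc ‖φ - u‖ * ‖c‖ ≤ ‖φ - u‖ * 1 := by
          apply mul_le_mul_of_nonneg_left c.norm_le_one (norm_nonneg _)
      _ = ‖φ - u‖ := mul_one _
      _ < 1 := hu2
  have hmain : ‖(n : ℤ_[p]) * u ^ (n - 1)‖ = 1 := by
    rw [norm_mul, norm_pow, hunorm, one_pow, mul_one]
    have h1 : ‖((n : ℤ) : ℤ_[p])‖ ≤ 1 := PadicInt.norm_le_one _
    have h2 : ¬ ((p : ℤ) ∣ (n : ℤ)) := by
      rw [Int.natCast_dvd_natCast]
      intro h; exact absurd (Nat.le_of_dvd (by omega) h) (by omega)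
    have h3 := (PadicInt.norm_int_lt_one_iff_dvd (n : ℤ)).not.mpr h2
    push_cast at h1 h3 ⊢
    exact le_antisymm h1 (not_lt.mp h3)
  have hsnorm : ‖s‖ = 1 := by
    have h : s = (n : ℤ_[p]) * u ^ (n - 1) + (s - (n : ℤ_[p]) * u ^ (n - 1)) := by ring
    rw [h, PadicInt.norm_add_eq_max_of_ne (by rw [hmain]; exact (ne_of_gt hsmall).symm ∘ Eq.symm)]
    rw [hmain]
    exact max_eq_left (le_of_lt (by rw [← hmain] at hsmall ⊢; exact lt_of_lt_of_le hsmall (le_of_eq rfl)))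
  have step2 : ‖φ ^ n - 1‖ = ‖φ - u‖ := by
    rw [← hu, ← hgeom, norm_mul, hsnorm, one_mul]
  rw [step1, step2]
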